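/- Let Y be a finite nonempty set, let p be a probability mass function on Y, and let X₁, …, Xₙ (n ≥ 1) be independent random variables each distributed according to p, with empirical distribution p̂ₙ(y) := (1/n)·|{i ∈ {1,…,n} : Xᵢ = y}|. Then for every δ ∈ (0,1], ℙ( Σ_{y∈Y} |p(y) − p̂ₙ(y)| ≥ √( (2·|Y|/n) · log(2/δ) ) ) ≤ δ. -/

import Mathlib

open MeasureTheory ProbabilityTheory Finset
open scoped Classical

lemma bern_log_bound (q : ℝ) (h0 : 0 ≤ q) (h1 : q ≤ 1) (s : ℝ) :
    Real.log (1 - q + q * Real.exp s) - q * s ≤ s ^ 2 / 8 := by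
  set D : ℝ → ℝ := fun s => 1 - q + q * Real.exp s with hDdef
  have hD : ∀ s, 0 < D s := by
    intro s
    rcases eq_or_lt_of_le h0 with h | h
    · simp [hDdef, ← h]
    · have : 0 < q * Real.exp s := mul_pos h (Real.exp_pos s)
      simp only [hDdef]; linarith
  set g : ℝ → ℝ := fun s => s ^ 2 / 8 - (Real.log (D s) - q * s) with hgdef
  set g' : ℝ → ℝ := fun s => s / 4 - (q * Real.exp s / D s - q) with hg'def
  have hDd : ∀ s, HasDerivAt D (q * Real.exp s) s := by
    intro s
    exact ((Real.hasDerivAt_exp s).const_mul q).const_add (1 - q)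
  have hgd : ∀ s, HasDerivAt g (g' s) s := by
    intro s
    have h1' : HasDerivAt (fun s => Real.log (D s)) (q * Real.exp s / D s) s :=
      (hDd s).log (hD s).ne'
    have h2 : HasDerivAt (fun s : ℝ => s ^ 2 / 8) (s / 4) s := by
      have := (hasDerivAt_pow 2 s).div_const 8
      refine this.congr_deriv ?_; push_cast; ring
    have h3 : HasDerivAt (fun s : ℝ => q * s) q s := by
      simpa using (hasDerivAt_id s).const_mul q
    exact h2.sub (h1'.sub h3)
  have hg'd : ∀ s, HasDerivAt g' (1 / 4 - q * Real.exp s * (1 - q) / (D s) ^ 2) s := by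
    intro s
    have hquot : HasDerivAt (fun s => q * Real.exp s / D s)
        ((q * Real.exp s * D s - q * Real.exp s * (q * Real.exp s)) / (D s) ^ 2) s :=
      ((Real.hasDerivAt_exp s).const_mul q).div (hDd s) (hD s).ne'
    have h2 : HasDerivAt (fun s : ℝ => s / 4) (1 / 4) s := by
      simpa using (hasDerivAt_id s).div_const 4
    have := h2.sub (hquot.sub (hasDerivAt_const s q))
    refine this.congr_deriv ?_
    have hDs : D s = 1 - q + q * Real.exp s := rfl
    rw [sub_zero, hDs]
    ring
  have hg''_nonneg : ∀ s, 0 ≤ 1 / 4 - q * Real.exp s * (1 - q) / (D s) ^ 2 := by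
    intro s
    rw [sub_nonneg, div_le_iff₀ (pow_pos (hD s) 2)]
    have hDs : D s = 1 - q + q * Real.exp s := rfl
    nlinarith [sq_nonneg ((1 - q) - q * Real.exp s), (Real.exp_pos s).le, h0]
  have hg'mono : Monotone g' :=
    monotone_of_hasDerivAt_nonneg hg'd hg''_nonneg
  have hg'0 : g' 0 = 0 := by
    simp [hg'def, hDdef, Real.exp_zero]
  have hg0 : g 0 = 0 := by
    have : D 0 = 1 := by simp [hDdef, Real.exp_zero]
    simp [hgdef, this]
  have key : 0 ≤ g s := by
    rcases le_or_gt 0 s with hs | hs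
    · have hmono : MonotoneOn g (Set.Ici 0) := by
        apply monotoneOn_of_deriv_nonneg (convex_Ici 0)
        · exact fun x _ => (hgd x).differentiableAt.continuousAt.continuousWithinAt
        · exact fun x _ => (hgd x).differentiableAt.differentiableWithinAt
        · intro x hx
          rw [(hgd x).deriv]
          rw [interior_Ici] at hx
          calc (0:ℝ) = g' 0 := hg'0.symm
          _ ≤ g' x := hg'mono (le_of_lt hx)
      have := hmono (Set.self_mem_Ici) (Set.mem_Ici.mpr hs) hs
      linarith [hg0 ▸ this]
    · have hanti : AntitoneOn g (Set.Iic 0) := by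
        apply antitoneOn_of_deriv_nonpos (convex_Iic 0)
        · exact fun x _ => (hgd x).differentiableAt.continuousAt.continuousWithinAt
        · exact fun x _ => (hgd x).differentiableAt.differentiableWithinAt
        · intro x hx
          rw [(hgd x).deriv]
          rw [interior_Iic] at hx
          calc g' x ≤ g' 0 := hg'mono (le_of_lt hx)
          _ = 0 := hg'0
      have := hanti (Set.mem_Iic.mpr hs.le) (Set.self_mem_Iic) hs.le
      linarith [hg0 ▸ this]
  simp only [hgdef] at key
  linarith


lemma bern_D_pos (q : ℝ) (h0 : 0 ≤ q) (s : ℝ) (h1 : q ≤ 1) :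
    0 < 1 - q + q * Real.exp s := by
  rcases eq_or_lt_of_le h0 with h | h
  · simp [← h]
  · have : 0 < q * Real.exp s := mul_pos h (Real.exp_pos s)
    linarith

lemma bern_mgf_bound (q t : ℝ) (h0 : 0 ≤ q) (h1 : q ≤ 1) :
    (1 - q) * Real.exp (t * q) + q * Real.exp (t * (q - 1)) ≤ Real.exp (t ^ 2 / 8) := by
  have hD : 0 < 1 - q + q * Real.exp (-t) := bern_D_pos q h0 (-t) h1
  have hlog := bern_log_bound q h0 h1 (-t)
  have hle : 1 - q + q * Real.exp (-t) ≤ Real.exp (t ^ 2 / 8 - t * q) := by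
    rw [← Real.log_le_iff_le_exp hD]
    nlinarith [hlog]
  have expand : (1 - q) * Real.exp (t * q) + q * Real.exp (t * (q - 1))
      = Real.exp (t * q) * (1 - q + q * Real.exp (-t)) := by
    have h : t * (q - 1) = t * q + -t := by ring
    rw [h, Real.exp_add]; ring
  rw [expand]
  calc Real.exp (t * q) * (1 - q + q * Real.exp (-t))
      ≤ Real.exp (t * q) * Real.exp (t ^ 2 / 8 - t * q) := by
        exact mul_le_mul_of_nonneg_left hle (Real.exp_pos _).le
    _ = Real.exp (t ^ 2 / 8) := by rw [← Real.exp_add]; ring_nf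

theorem weissman_l1_confidence
    {Ω : Type*} [MeasurableSpace Ω] (P : Measure Ω) [IsProbabilityMeasure P]
    {Y : Type*} [Fintype Y] [Nonempty Y] [MeasurableSpace Y] [MeasurableSingletonClass Y]
    (p : Y → ℝ) (hp0 : ∀ y, 0 ≤ p y) (hp1 : ∑ y, p y = 1)
    (n : ℕ) (hn : 1 ≤ n) (X : Fin n → Ω → Y)
    (hmeas : ∀ i, Measurable (X i))
    (hindep : iIndepFun X P)
    (hlaw : ∀ i y, P {ω | X i ω = y} = ENNReal.ofReal (p y))
    (δ : ℝ) (hδ0 : 0 < δ) (hδ1 : δ ≤ 1) :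
    P {ω | Real.sqrt ((2 * (Fintype.card Y : ℝ) / n) * Real.log (2 / δ))
            ≤ ∑ y, |p y - (1 / n : ℝ) * ((univ.filter (fun i => X i ω = y)).card : ℝ)|}
      ≤ ENNReal.ofReal δ := by
  classical
  set k := Fintype.card Y with hk
  have hkpos : 1 ≤ k := Fintype.card_pos
  have hnR : (0:ℝ) < n := by exact_mod_cast hn
  set L := Real.log (2 / δ) with hLdef
  have hL0 : 0 ≤ L := Real.log_nonneg (by rw [le_div_iff₀ hδ0]; linarith)
  set ε := Real.sqrt ((2 * (k:ℝ) / n) * L) with hεdef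
  have hε0 : 0 ≤ ε := Real.sqrt_nonneg _
  have hε2 : ε ^ 2 = (2 * (k:ℝ) / n) * L := Real.sq_sqrt (by positivity)
  -- the per-subset centered variables
  set W : Finset Y → Fin n → Ω → ℝ :=
    fun A i ω => (∑ y ∈ A, p y) - (if X i ω ∈ A then (1:ℝ) else 0) with hWdef
  set E : Finset Y → Set Ω := fun A => {ω | (n:ℝ) * ε / 2 ≤ (∑ i, W A i) ω} with hEdef
  -- the per-subset tail bound
  have key : ∀ A : Finset Y, P (E A) ≤ ENNReal.ofReal ((δ / 2) ^ k) := by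
    intro A
    set q := ∑ y ∈ A, p y with hqdef
    have hq0 : 0 ≤ q := Finset.sum_nonneg fun y _ => hp0 y
    have hq1 : q ≤ 1 := by
      rw [← hp1]
      exact Finset.sum_le_sum_of_subset_of_nonneg (subset_univ A) fun y _ _ => hp0 y
    have hAmeas : MeasurableSet (A : Set Y) := A.finite_toSet.measurableSet
    have hB : ∀ i, MeasurableSet (X i ⁻¹' (A : Set Y)) := fun i => (hmeas i) hAmeas
    have hWmeas : ∀ i, Measurable (W A i) := by
      intro i
      apply Measurable.sub measurable_const
      exact Measurable.ite (hB i) measurable_const measurable_const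
    have hWindep : iIndepFun (W A) P := by
      have := hindep.comp (fun _ y => q - (if y ∈ A then (1:ℝ) else 0))
        (fun _ => measurable_of_countable _)
      exact this
    have hWbdd : ∀ i ω, |W A i ω| ≤ 1 := by
      intro i ω
      rw [abs_le]
      by_cases h : X i ω ∈ A <;> simp [hWdef, h] <;> constructor <;> linarith
    set t := 2 * ε with htdef
    have ht : 0 ≤ t := by positivity
    have hint : ∀ i ∈ (univ : Finset (Fin n)),
        Integrable (fun ω => Real.exp (t * W A i ω)) P := by
      intro i _
      apply Integrable.mono' (integrable_const (Real.exp |t|))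
      · exact (((hWmeas i).const_mul t).exp).aestronglyMeasurable
      · refine ae_of_all _ fun ω => ?_
        rw [Real.norm_eq_abs, Real.abs_exp, Real.exp_le_exp]
        calc t * W A i ω ≤ |t * W A i ω| := le_abs_self _
          _ = |t| * |W A i ω| := abs_mul _ _
          _ ≤ |t| * 1 := by gcongr; exact hWbdd i ω
          _ = |t| := mul_one _
    have hSint : Integrable (fun ω => Real.exp (t * (∑ i, W A i) ω)) P :=
      hWindep.integrable_exp_mul_sum hWmeas hint
    have hPB : ∀ i, P (X i ⁻¹' (A : Set Y)) = ENNReal.ofReal q := by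
      intro i
      have hun : X i ⁻¹' (A : Set Y) = ⋃ y ∈ A, {ω | X i ω = y} := by
        ext ω; simp
      rw [hun, measure_biUnion_finset]
      · rw [hqdef, ENNReal.ofReal_sum_of_nonneg fun y _ => hp0 y]
        exact Finset.sum_congr rfl fun y _ => hlaw i y
      · intro y _ z _ hyz
        refine Set.disjoint_left.mpr fun ω h1 h2 => hyz ?_
        rw [← h1, ← h2]
      · intro y _
        exact (hmeas i) (measurableSet_singleton y)
    have hmgf : ∀ i, mgf (W A i) P t ≤ Real.exp (t ^ 2 / 8) := by
      intro i
      have hfun : (fun ω => Real.exp (t * W A i ω))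
          = fun ω => Real.exp (t * q) + (Real.exp (t * (q - 1)) - Real.exp (t * q)) *
              Set.indicator (X i ⁻¹' (A : Set Y)) (fun _ => (1:ℝ)) ω := by
        funext ω
        by_cases h : X i ω ∈ A
        · rw [Set.indicator_of_mem (show ω ∈ X i ⁻¹' (A : Set Y) from h)]
          simp only [hWdef, if_pos h, ← hqdef]
          ring_nf
        · rw [Set.indicator_of_notMem (show ω ∉ X i ⁻¹' (A : Set Y) from h)]
          simp only [hWdef, if_neg h, ← hqdef]
          ring_nf
      have hind : Integrable (Set.indicator (X i ⁻¹' (A : Set Y)) (fun _ => (1:ℝ))) P :=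
        (integrable_const (1:ℝ)).indicator (hB i)
      have hval : mgf (W A i) P t
          = Real.exp (t * q) + (Real.exp (t * (q - 1)) - Real.exp (t * q)) * q := by
        rw [mgf, hfun, integral_add (integrable_const _) (hind.const_mul _),
          integral_const, integral_const_mul]
        have hione : ∫ ω, Set.indicator (X i ⁻¹' (A : Set Y)) (fun _ => (1:ℝ)) ω ∂P
            = ((P (X i ⁻¹' (A : Set Y))).toReal) := by
          rw [integral_indicator (hB i)]
          simp [measureReal_def]
        rw [hione, hPB i, ENNReal.toReal_ofReal hq0]
        simp [measure_univ]
      rw [hval]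
      have := bern_mgf_bound q t hq0 hq1
      nlinarith [this]
    have hcher := measure_ge_le_exp_mul_mgf (μ := P) (X := ∑ i, W A i)
      ((n:ℝ) * ε / 2) ht hSint
    rw [hWindep.mgf_sum hWmeas univ] at hcher
    have hprod : ∏ i, mgf (W A i) P t ≤ (Real.exp (t ^ 2 / 8)) ^ n := by
      calc ∏ i, mgf (W A i) P t ≤ ∏ _i : Fin n, Real.exp (t ^ 2 / 8) :=
            Finset.prod_le_prod (fun i _ => mgf_nonneg) (fun i _ => hmgf i)
        _ = (Real.exp (t ^ 2 / 8)) ^ n := by rw [Finset.prod_const, card_univ, Fintype.card_fin]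
    have hbound : (P (E A)).toReal ≤ (δ / 2) ^ k := by
      have h1 : (P (E A)).toReal ≤ Real.exp (-t * ((n:ℝ) * ε / 2)) * (Real.exp (t ^ 2 / 8)) ^ n := by
        exact le_trans hcher (mul_le_mul_of_nonneg_left hprod (Real.exp_nonneg _))
      have h2 : Real.exp (-t * ((n:ℝ) * ε / 2)) * (Real.exp (t ^ 2 / 8)) ^ n
          = Real.exp (-((k:ℝ) * L)) := by
        rw [← Real.exp_nat_mul, ← Real.exp_add]
        congr 1
        have : -t * ((n:ℝ) * ε / 2) + (n:ℝ) * (t ^ 2 / 8) = -((n:ℝ) * ε ^ 2 / 2) := by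
          rw [htdef]; ring
        rw [this, hε2]
        field_simp
      have h3 : Real.exp (-((k:ℝ) * L)) = (δ / 2) ^ k := by
        rw [show -((k:ℝ) * L) = (k:ℝ) * (-L) by ring, Real.exp_nat_mul, Real.exp_neg, hLdef,
          Real.exp_log (by positivity : (0:ℝ) < 2 / δ)]
        congr 1
        field_simp
      rw [h2, h3] at h1
      exact h1
    rw [← ENNReal.ofReal_toReal (measure_ne_top P (E A))]
    exact ENNReal.ofReal_le_ofReal hbound
  -- counting identities
  have hcount : ∀ ω, ∑ y, ((univ.filter (fun i => X i ω = y)).card : ℝ) = (n : ℝ) := by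
    intro ω
    rw [← Nat.cast_sum]
    congr 1
    rw [← Finset.card_eq_sum_card_fiberwise (fun i _ => mem_univ (X i ω)), card_univ,
      Fintype.card_fin]
  have hfiber : ∀ ω (A : Finset Y),
      ∑ y ∈ A, ((univ.filter (fun i => X i ω = y)).card : ℝ)
        = ((univ.filter (fun i => X i ω ∈ A)).card : ℝ) := by
    intro ω A
    rw [← Nat.cast_sum]
    congr 1
    rw [Finset.card_eq_sum_card_fiberwise
      (fun i hi => (mem_filter.mp hi).2 : ∀ i ∈ univ.filter (fun i => X i ω ∈ A), X i ω ∈ A)]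
    refine (Finset.sum_congr rfl fun y hy => ?_).symm
    congr 1
    ext i
    simp only [mem_filter, mem_univ, true_and]
    constructor
    · exact fun h => h.2
    · intro h; exact ⟨by rw [h]; exact hy, h⟩
  -- inclusion into the union of subset events
  have hsub : {ω | ε ≤ ∑ y, |p y - (1 / n : ℝ) * ((univ.filter (fun i => X i ω = y)).card : ℝ)|}
      ⊆ ⋃ A : Finset Y, E A := by
    intro ω hω
    simp only [Set.mem_setOf_eq] at hω
    set f : Y → ℝ := fun y => (1 / n : ℝ) * ((univ.filter (fun i => X i ω = y)).card : ℝ)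
      with hfdef
    have hsumf : ∑ y, f y = 1 := by
      rw [hfdef]
      simp only []
      rw [← Finset.mul_sum, hcount ω]
      field_simp
    set A : Finset Y := univ.filter (fun y => f y < p y) with hAdef
    have hzero : ∑ y ∈ A, (p y - f y) + ∑ y ∈ univ.filter (fun y => ¬ f y < p y), (p y - f y)
        = 0 := by
      rw [Finset.sum_filter_add_sum_filter_not, Finset.sum_sub_distrib, hp1, hsumf]
      ring
    have habs : ∑ y, |p y - f y| = 2 * ∑ y ∈ A, (p y - f y) := by
      rw [← Finset.sum_filter_add_sum_filter_not univ (fun y => f y < p y)]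
      have e1 : ∑ y ∈ univ.filter (fun y => f y < p y), |p y - f y|
          = ∑ y ∈ A, (p y - f y) :=
        Finset.sum_congr rfl fun y hy => abs_of_pos (by
          have := (mem_filter.mp hy).2; linarith)
      have e2 : ∑ y ∈ univ.filter (fun y => ¬ f y < p y), |p y - f y|
          = -∑ y ∈ univ.filter (fun y => ¬ f y < p y), (p y - f y) := by
        rw [← Finset.sum_neg_distrib]
        refine Finset.sum_congr rfl fun y hy => abs_of_nonpos (by
          have := (mem_filter.mp hy).2; push_neg at this; linarith)
      rw [e1, e2]
      linarith [hzero]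
    have hA : ε / 2 ≤ ∑ y ∈ A, (p y - f y) := by
      rw [habs] at hω; linarith
    refine Set.mem_iUnion.mpr ⟨A, ?_⟩
    rw [hEdef]
    simp only [Set.mem_setOf_eq, Finset.sum_apply]
    have hsumW : ∑ i, W A i ω
        = (n : ℝ) * ((∑ y ∈ A, p y) - (1 / n : ℝ)
            * ((univ.filter (fun i => X i ω ∈ A)).card : ℝ)) := by
      rw [hWdef]
      simp only []
      rw [Finset.sum_sub_distrib, Finset.sum_const, card_univ, Fintype.card_fin,
        Finset.sum_boole]
      field_simp
      ring
    rw [hsumW]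
    have hA' : ε / 2 ≤ (∑ y ∈ A, p y) - (1 / n : ℝ)
        * ((univ.filter (fun i => X i ω ∈ A)).card : ℝ) := by
      have : ∑ y ∈ A, (p y - f y)
          = (∑ y ∈ A, p y) - (1 / n : ℝ) * ((univ.filter (fun i => X i ω ∈ A)).card : ℝ) := by
        rw [Finset.sum_sub_distrib, hfdef]
        simp only []
        rw [← Finset.mul_sum, hfiber ω A]
      linarith [this ▸ hA]
    nlinarith [hA', hnR]
  -- union bound and final computation
  calc P {ω | ε ≤ ∑ y, |p y - (1 / n : ℝ) * ((univ.filter (fun i => X i ω = y)).card : ℝ)|}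
      ≤ P (⋃ A : Finset Y, E A) := measure_mono hsub
    _ ≤ ∑ A : Finset Y, P (E A) := measure_iUnion_fintype_le P E
    _ ≤ ∑ _A : Finset Y, ENNReal.ofReal ((δ / 2) ^ k) :=
        Finset.sum_le_sum fun A _ => key A
    _ = (2 ^ k : ℕ) * ENNReal.ofReal ((δ / 2) ^ k) := by
        rw [Finset.sum_const, card_univ, Fintype.card_finset, hk, nsmul_eq_mul]
    _ ≤ ENNReal.ofReal δ := by
        rw [show ((2 ^ k : ℕ) : ENNReal) = ENNReal.ofReal ((2:ℝ) ^ k) by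
          rw [← ENNReal.ofReal_natCast]; norm_num]
        rw [← ENNReal.ofReal_mul (by positivity)]
        apply ENNReal.ofReal_le_ofReal
        have : (2:ℝ) ^ k * (δ / 2) ^ k = δ ^ k := by
          rw [div_pow]; field_simp
        rw [this]
        calc δ ^ k ≤ δ ^ 1 := pow_le_pow_of_le_one hδ0.le hδ1 hkpos
          _ = δ := pow_one δ
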